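/- arXiv:2603.11630 — 4 statements merged into one kernel-verified Lean document; each statement's English description precedes it below -/
import Mathlib

section
/- If the preorder ≼ on A has no minimal elements (for every a ∈ A there is b with b ≼ a and ¬(a ≼ b)), then the shifted preorder ≼⁺ on nonempty subsets of A also has no minimal elements: for every nonempty x ⊆ A there is a nonempty y ⊆ A with y ≼⁺ x and ¬(x ≼⁺ y). -/
def shiftRel {α : Type*} (r : α → α → Prop) (x y : Set α) : Prop :=
  ∀ a ∈ x, ∃ b ∈ y, r a b

theorem shiftRel_no_minimal {α : Type*} (r : α → α → Prop)
    (hrefl : ∀ a, r a a) (htrans : ∀ a b c, r a b → r b c → r a c)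
    (hmin : ∀ a : α, ∃ b, r b a ∧ ¬ r a b) :
    ∀ x : Set α, x.Nonempty →
      ∃ y : Set α, y.Nonempty ∧ shiftRel r y x ∧ ¬ shiftRel r x y := by
  rintro x ⟨a, ha⟩
  obtain ⟨b, hba, hnab⟩ := hmin a
  refine ⟨{c | r c b}, ⟨b, hrefl b⟩, fun c hc => ⟨a, ha, htrans c b a hc hba⟩, fun h => ?_⟩
  obtain ⟨c, hc, hac⟩ := h a ha
  exact hnab (htrans a c b hac hc)
end

section
/- In a poset with principal downsets pr(x) = {z : z ≤ x}, suppose p₀, p₁ are incomparable elements and u, v, u', v' are elements each incomparable with p₀ and p₁ in the sense that no u-type element is ≤ p₀ or p₁ and vice versa. Define ⟨⟨u,v⟩⟩ = pr(s(u,p₀)) ∪ pr(s(v,p₁)) where s denotes join (union). Then under the disjointness hypotheses of the paper (elements of the x-sort never lie below p₀ or p₁, and p₀ ⊄ p₁, p₁ ⊄ p₀), ⟨⟨x,y⟩⟩ = ⟨⟨x',y'⟩⟩ implies x = x' and y = y'. -/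
/-- principal downset in the powerset -/
def pr {α : Type*} (w : Set α) : Set (Set α) := {z | z ⊆ w}

/-- magmatic ordered pair with tags `c₀`, `c₁` -/
def mpair {α : Type*} (c₀ c₁ x y : Set α) : Set (Set α) :=
  pr (x ∪ c₀) ∪ pr (y ∪ c₁)

theorem mpair_injective {α : Type*} (c₀ c₁ : Set α)
    (hc₀ : ¬ c₀ ⊆ c₁) (hc₁ : ¬ c₁ ⊆ c₀)
    (x y x' y' : Set α)
    (hdata : ∀ d ∈ ({x, y, x', y'} : Set (Set α)),
      Disjoint d c₀ ∧ Disjoint d c₁ ∧ ¬ d ⊆ c₀ ∧ ¬ d ⊆ c₁)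
    (h : mpair c₀ c₁ x y = mpair c₀ c₁ x' y') :
    x = x' ∧ y = y' := by
  have hx := hdata x (by simp)
  have hy := hdata y (by simp)
  have hx' := hdata x' (by simp)
  have hy' := hdata y' (by simp)
  have not01 : ∀ d e : Set α, Disjoint e c₀ → ¬ (d ∪ c₀ ⊆ e ∪ c₁) := by
    intro d e he hsub
    obtain ⟨a, ha0, ha1⟩ := Set.not_subset.mp hc₀
    rcases hsub (Or.inr ha0) with hm | hm
    · exact Set.disjoint_left.mp he hm ha0
    · exact ha1 hm
  have not10 : ∀ d e : Set α, Disjoint e c₁ → ¬ (d ∪ c₁ ⊆ e ∪ c₀) := by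
    intro d e he hsub
    obtain ⟨a, ha1, ha0⟩ := Set.not_subset.mp hc₁
    rcases hsub (Or.inr ha1) with hm | hm
    · exact Set.disjoint_left.mp he hm ha1
    · exact ha0 hm
  have fst : ∀ u v u' v' : Set α, Disjoint u c₀ → Disjoint v' c₀ →
      mpair c₀ c₁ u v = mpair c₀ c₁ u' v' → u ⊆ u' := by
    intro u v u' v' hu hv' heq
    have hmem : (u ∪ c₀) ∈ mpair c₀ c₁ u' v' := by
      rw [← heq]; exact Or.inl (Set.Subset.refl _)
    rcases hmem with hs | hs
    · intro a ha
      rcases hs (Or.inl ha) with hm | hm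
      · exact hm
      · exact absurd hm (Set.disjoint_left.mp hu ha)
    · exact absurd hs (not01 u v' hv')
  have snd : ∀ u v u' v' : Set α, Disjoint v c₁ → Disjoint u' c₁ →
      mpair c₀ c₁ u v = mpair c₀ c₁ u' v' → v ⊆ v' := by
    intro u v u' v' hv hu' heq
    have hmem : (v ∪ c₁) ∈ mpair c₀ c₁ u' v' := by
      rw [← heq]; exact Or.inr (Set.Subset.refl _)
    rcases hmem with hs | hs
    · exact absurd hs (not10 v u' hu')
    · intro a ha
      rcases hs (Or.inl ha) with hm | hm
      · exact hm
      · exact absurd hm (Set.disjoint_left.mp hv ha)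
  exact ⟨Set.Subset.antisymm (fst x y x' y' hx.1 hy'.1 h)
      (fst x' y' x y hx'.1 hy.1 h.symm),
    Set.Subset.antisymm (snd x y x' y' hy.2.1 hx'.2.1 h)
      (snd x' y' x y hy'.2.1 hx.2.1 h.symm)⟩
end

section
/- With the magmatic pair ⟨⟨x,y⟩⟩ = pr(x ∪ c₀) ∪ pr(y ∪ c₁) (under the tag-incomparability and data/tag disjointness hypotheses), one has ⟨⟨x',y'⟩⟩ ⊆ ⟨⟨x,y⟩⟩ if and only if x' ⊆ x and y' ⊆ y. -/
theorem mpair_subset_iff {α : Type*} (c₀ c₁ : Set α)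
    (hc₀ : ¬ c₀ ⊆ c₁) (hc₁ : ¬ c₁ ⊆ c₀)
    (x y x' y' : Set α)
    (hdata : ∀ d ∈ ({x, y, x', y'} : Set (Set α)),
      Disjoint d c₀ ∧ Disjoint d c₁ ∧ ¬ d ⊆ c₀ ∧ ¬ d ⊆ c₁ ∧
      ¬ c₀ ⊆ d ∧ ¬ c₁ ⊆ d) :
    mpair c₀ c₁ x' y' ⊆ mpair c₀ c₁ x y ↔ x' ⊆ x ∧ y' ⊆ y := by
  obtain ⟨hx0, hx1, -⟩ := hdata x (by simp)
  obtain ⟨hy0, hy1, -⟩ := hdata y (by simp)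
  obtain ⟨hx'0, hx'1, -⟩ := hdata x' (by simp)
  obtain ⟨hy'0, hy'1, -⟩ := hdata y' (by simp)
  constructor
  · intro h
    obtain ⟨a, ha0, ha1⟩ := Set.not_subset.mp hc₀
    obtain ⟨b, hb1, hb0⟩ := Set.not_subset.mp hc₁
    have h1 : x' ∪ c₀ ∈ mpair c₀ c₁ x y := h (Or.inl (fun z hz => hz))
    have h2 : y' ∪ c₁ ∈ mpair c₀ c₁ x y := h (Or.inr (fun z hz => hz))
    constructor
    · rcases h1 with h1 | h1
      · intro t ht
        rcases h1 (Or.inl ht) with h | h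
        · exact h
        · exact absurd h (hx'0.ne_of_mem ht · rfl)
      · -- x' ∪ c₀ ⊆ y ∪ c₁: a ∈ c₀, a ∉ c₁, so a ∈ y, contradicting Disjoint y c₀
        rcases h1 (Or.inr ha0) with h | h
        · exact absurd rfl (hy0.ne_of_mem h ha0)
        · exact absurd h ha1
    · rcases h2 with h2 | h2
      · rcases h2 (Or.inr hb1) with h | h
        · exact absurd rfl (hx1.ne_of_mem h hb1)
        · exact absurd h hb0
      · intro t ht
        rcases h2 (Or.inl ht) with h | h
        · exact h
        · exact absurd h (hy'1.ne_of_mem ht · rfl)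
  · rintro ⟨hxx, hyy⟩ z hz
    rcases hz with hz | hz
    · exact Or.inl (hz.trans (Set.union_subset_union_left _ hxx))
    · exact Or.inr (hz.trans (Set.union_subset_union_left _ hyy))
end

section
/- Let R = ⋃_{i∈I} pr(⟨⟨zᵢ,wᵢ⟩⟩) be a magmatic semi-function (zᵢ = zⱼ → wᵢ = wⱼ). If the family {zᵢ : i ∈ I} is pairwise disjoint (zᵢ ∩ zⱼ = ∅ for i ≠ j), then for every z ∈ dom(R), the set R[z] = {w : ⟨⟨z,w⟩⟩ ∈ R} has a greatest element with respect to ⊆, namely the unique wᵢ with z ⊆ zᵢ; hence R is a magmatic function. -/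
theorem semiFunction_is_function_of_pairwise_disjoint {α ι : Type*}
    (pair : Set α → Set α → Set α)
    (hpair : ∀ z w z' w' : Set α, pair z' w' ⊆ pair z w ↔ z' ⊆ z ∧ w' ⊆ w)
    (z w : ι → Set α)
    (hne : ∀ i, (z i).Nonempty)
    (hsemi : ∀ i j, z i = z j → w i = w j)
    (hdisj : ∀ i j, i ≠ j → z i ∩ z j = ∅)
    (R : Set (Set α)) (hR : R = ⋃ i, {p : Set α | p ⊆ pair (z i) (w i)}) :
    ∀ zz : Set α, zz.Nonempty →
      (∃ ww : Set α, pair zz ww ∈ R) →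
      ∃ i, zz ⊆ z i ∧ pair zz (w i) ∈ R ∧
        ∀ ww : Set α, pair zz ww ∈ R → ww ⊆ w i := by
  intro zz hzz ⟨ww, hww⟩
  rw [hR] at hww
  simp only [Set.mem_iUnion, Set.mem_setOf_eq] at hww
  obtain ⟨i, hi⟩ := hww
  obtain ⟨hz, _⟩ := (hpair _ _ _ _).mp hi
  refine ⟨i, hz, ?_, ?_⟩
  · rw [hR]
    exact Set.mem_iUnion.mpr ⟨i, (hpair _ _ _ _).mpr ⟨hz, subset_rfl⟩⟩
  · intro ww' hww'
    rw [hR] at hww'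
    simp only [Set.mem_iUnion, Set.mem_setOf_eq] at hww'
    obtain ⟨j, hj⟩ := hww'
    obtain ⟨hzj, hwj⟩ := (hpair _ _ _ _).mp hj
    have hij : i = j := by
      by_contra h
      obtain ⟨x, hx⟩ := hzz
      have : x ∈ z i ∩ z j := ⟨hz hx, hzj hx⟩
      rw [hdisj i j h] at this
      exact this
    exact hij ▸ hwj
end
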